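/- If a solvable contact Lie algebra 𝔤 of dimension 2n+1 has derived ideal 𝔑 = [𝔤,𝔤] of codimension 1, then the center Z(𝔑) of 𝔑 has dimension at most 2. -/

import Mathlib

open Module

/-- `η` is a contact form on the odd-dimensional real Lie algebra `L`: equivalently to the
condition `(∂η)^n ∧ η ≠ 0` (with `dim L = 2n+1`, `∂η (x,y) = -η ⁅x,y⁆`), `η ≠ 0` and the
2-form `∂η` is nondegenerate on the kernel of `η`. -/
def IsContactForm {L : Type*} [LieRing L] [LieAlgebra ℝ L] (η : Module.Dual ℝ L) : Prop :=
  η ≠ 0 ∧ ∀ x : L, η x = 0 → (∀ y : L, η y = 0 → η ⁅x, y⁆ = 0) → x = 0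

/-- `α` is an exact symplectic form on the even-dimensional real Lie algebra `L`:
equivalently to `(∂α)^m ≠ 0` (with `dim L = 2m`), the 2-form `∂α (x,y) = -α ⁅x,y⁆`
is nondegenerate. -/
def IsExactSymplecticForm {L : Type*} [LieRing L] [LieAlgebra ℝ L] (α : Module.Dual ℝ L) : Prop :=
  ∀ x : L, (∀ y : L, α ⁅x, y⁆ = 0) → x = 0

/-- If a solvable contact Lie algebra of dimension `2n+1` has derived ideal
`𝔑 = [𝔤,𝔤]` of codimension 1, then the center of `𝔑` has dimension at most 2. -/
theorem solvable_codim_one_derived_center {L : Type*} [LieRing L] [LieAlgebra ℝ L]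
    [FiniteDimensional ℝ L] [LieAlgebra.IsSolvable L]
    (n : ℕ) (hn : 1 ≤ n) (hdim : finrank ℝ L = 2 * n + 1)
    (η : Module.Dual ℝ L) (hη : IsContactForm η)
    (hN : finrank ℝ ↥(LieAlgebra.derivedSeries ℝ L 1) = 2 * n) :
    finrank ℝ ↥(LieAlgebra.center ℝ ↥(LieAlgebra.derivedSeries ℝ L 1)) ≤ 2 := by
  classical
  obtain ⟨hη0, hcontact⟩ := hη
  set N : LieIdeal ℝ L := LieAlgebra.derivedSeries ℝ L 1 with hNdef
  set Nsub : Submodule ℝ L := LieSubmodule.toSubmodule N with hNsubdef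
  set K : Submodule ℝ L := LinearMap.ker η with hKdef
  -- finrank of K
  have hKmem : ∀ x : L, x ∈ K ↔ η x = 0 := fun x => LinearMap.mem_ker
  have hKrank : finrank ℝ K = 2 * n := by
    have h1 : finrank ℝ (LinearMap.range η) + finrank ℝ (LinearMap.ker η) = finrank ℝ L :=
      LinearMap.finrank_range_add_finrank_ker η
    have h2 : finrank ℝ (LinearMap.range η) = 1 := by
      have hle : finrank ℝ (LinearMap.range η) ≤ 1 := by
        simpa using Submodule.finrank_le (LinearMap.range η)
      have hne : LinearMap.range η ≠ ⊥ := by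
        simpa [LinearMap.range_eq_bot] using hη0
      have hpos : 0 < finrank ℝ (LinearMap.range η) := by
        have : Nontrivial (LinearMap.range η) := Submodule.nontrivial_iff_ne_bot.mpr hne
        exact Module.finrank_pos
      omega
    rw [hKdef]; omega
  -- the bilinear form on K
  let B : LinearMap.BilinForm ℝ K := LinearMap.mk₂ ℝ (fun x y => η ⁅(x : L), (y : L)⁆)
    (by intro x x' y; simp [add_lie])
    (by intro a x y; simp [smul_lie])
    (by intro x y y'; simp [lie_add])
    (by intro a x y; simp [lie_smul])
  have hBapp : ∀ x y : K, B x y = η ⁅(x : L), (y : L)⁆ := fun x y => rfl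
  have hBrefl : B.IsRefl := by
    intro x y h
    rw [hBapp] at h ⊢
    rw [← lie_skew, map_neg, h, neg_zero]
  have hBnd : B.Nondegenerate := by
    refine LinearMap.BilinForm.Nondegenerate.ofSeparatingLeft ?_
    intro x hx
    have : (x : L) = 0 := by
      refine hcontact x ((hKmem x).mp x.2) ?_
      intro y hy
      exact hx ⟨y, (hKmem y).mpr hy⟩
    exact Subtype.ext this
  -- the center as a submodule of L
  set Zsub : Submodule ℝ L :=
    Submodule.map Nsub.subtype ((LieAlgebra.center ℝ ↥N : LieIdeal ℝ ↥N) : Submodule ℝ ↥N)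
    with hZdef
  have hZrank : finrank ℝ ↥(LieAlgebra.center ℝ ↥N) = finrank ℝ Zsub := by
    rw [hZdef, Submodule.finrank_map_subtype_eq]; rfl
  have hZcomm : ∀ z ∈ Zsub, ∀ y ∈ Nsub, ⁅z, y⁆ = (0 : L) := by
    rintro z ⟨m, hm, rfl⟩ y hy
    have hyN : y ∈ N := hy
    have h0 : ⁅(⟨y, hyN⟩ : N), m⁆ = 0 :=
      (LieModule.mem_maxTrivSubmodule ℝ ↥N ↥N m).mp hm ⟨y, hyN⟩
    have h1 : ⁅(show ↥N from m), (⟨y, hyN⟩ : N)⁆ = 0 := by rw [← lie_skew, h0, neg_zero]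
    have h2 := congrArg (fun t : ↥N => (t : L)) h1
    simpa using h2
  -- subspaces of K
  set W1 : Submodule ℝ K := Submodule.comap K.subtype Nsub with hW1def
  set W2 : Submodule ℝ K := Submodule.comap K.subtype Zsub with hW2def
  have hmap1 : Submodule.map K.subtype W1 = K ⊓ Nsub := Submodule.map_comap_subtype K Nsub
  have hmap2 : Submodule.map K.subtype W2 = K ⊓ Zsub := Submodule.map_comap_subtype K Zsub
  have hW1rank : 2 * n - 1 ≤ finrank ℝ W1 := by
    have h1 : finrank ℝ (Nsub ⊔ K : Submodule ℝ L) + finrank ℝ (Nsub ⊓ K : Submodule ℝ L)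
        = finrank ℝ Nsub + finrank ℝ K := Submodule.finrank_sup_add_finrank_inf_eq Nsub K
    have h2 : finrank ℝ (Nsub ⊔ K : Submodule ℝ L) ≤ 2 * n + 1 := by
      rw [← hdim]; exact Submodule.finrank_le _
    have h3 : finrank ℝ Nsub = 2 * n := hN
    have h4 : finrank ℝ W1 = finrank ℝ (K ⊓ Nsub : Submodule ℝ L) := by
      rw [← hmap1, Submodule.finrank_map_subtype_eq]
    rw [inf_comm] at h4
    omega
  have hW2le : W2 ≤ B.orthogonal W1 := by
    intro x hx
    rw [LinearMap.BilinForm.mem_orthogonal_iff]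
    intro y hy
    have hzero : ⁅(x : L), (y : L)⁆ = 0 := hZcomm _ hx _ hy
    have : ⁅(y : L), (x : L)⁆ = 0 := by rw [← lie_skew, hzero, neg_zero]
    show B y x = 0
    rw [hBapp, this, map_zero]
  have hW2rank : finrank ℝ W2 ≤ 1 := by
    have h1 : finrank ℝ (B.orthogonal W1) = finrank ℝ K - finrank ℝ W1 :=
      LinearMap.BilinForm.finrank_orthogonal hBnd W1
    have h2 : finrank ℝ W2 ≤ finrank ℝ (B.orthogonal W1) := Submodule.finrank_mono hW2le
    have h3 : finrank ℝ W1 ≤ finrank ℝ K := Submodule.finrank_le W1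
    omega
  -- conclude
  have hinf : finrank ℝ (K ⊓ Zsub : Submodule ℝ L) ≤ 1 := by
    rw [← hmap2, Submodule.finrank_map_subtype_eq]; exact hW2rank
  set f : Zsub →ₗ[ℝ] ℝ := η.domRestrict Zsub with hfdef
  have hkerrank : finrank ℝ (LinearMap.ker f) ≤ 1 := by
    have hker : LinearMap.ker f = Submodule.comap Zsub.subtype K :=
      LinearMap.ker_domRestrict Zsub η
    have h5 : finrank ℝ (Submodule.comap Zsub.subtype K)
        = finrank ℝ (Zsub ⊓ K : Submodule ℝ L) := by
      rw [← Submodule.map_comap_subtype, Submodule.finrank_map_subtype_eq]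
    rw [hker, h5, inf_comm]
    exact hinf
  have hrange : finrank ℝ (LinearMap.range f) ≤ 1 := by
    simpa using Submodule.finrank_le (LinearMap.range f)
  have hsum : finrank ℝ (LinearMap.range f) + finrank ℝ (LinearMap.ker f) = finrank ℝ Zsub :=
    LinearMap.finrank_range_add_finrank_ker f
  rw [hZrank]
  omega
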